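/- Let f : ℝ → ℝ² be L-periodic and twice differentiable with absolutely integrable second derivative on [0,L]. Then (∫₀ᴸ |f'(t)| dt)² ≤ 8 · (∫₀ᴸ |f(t)| dt) · (∫₀ᴸ |f''(t)| dt). -/

import Mathlib

open MeasureTheory Set Filter Topology

section Aux

variable {E : Type*} [NormedAddCommGroup E] [NormedSpace ℝ E] [CompleteSpace E]

lemma periodic_norm_bound {g : ℝ → E} {L : ℝ} (hL : 0 < L) (hg : Function.Periodic g L)
    (hc : Continuous g) : ∃ M : ℝ, 0 ≤ M ∧ ∀ t, ‖g t‖ ≤ M := by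
  obtain ⟨M, hM⟩ := isBounded_iff_forall_norm_le.mp (hg.isBounded_of_continuous hL.ne' hc)
  exact ⟨max M 0, le_max_right _ _, fun t =>
    le_trans (hM _ (mem_range_self t)) (le_max_left _ _)⟩

lemma exp_tendsto_zero {l : ℝ} (hl : 0 < l) :
    Tendsto (fun s : ℝ => Real.exp (-l * s)) atTop (𝓝 0) :=
  Real.tendsto_exp_atBot.comp (tendsto_id.const_mul_atTop_of_neg (neg_neg_iff_pos.2 hl))

lemma integral_exp_neg_mul_Ioi {l : ℝ} (hl : 0 < l) :
    (∫ s in Ioi (0:ℝ), Real.exp (-l * s)) = 1 / l := by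
  have hF : ∀ s : ℝ, HasDerivAt (fun s : ℝ => -(1 / l) * Real.exp (-l * s))
      (Real.exp (-l * s)) s := by
    intro s
    have h1 : HasDerivAt (fun s : ℝ => -l * s) (-l) s := by
      simpa using (hasDerivAt_id s).const_mul (-l)
    have := h1.exp.const_mul (-(1 / l))
    rw [show -(1 / l) * (Real.exp (-l * s) * -l) = Real.exp (-l * s) by
      linear_combination (Real.exp (-l * s)) * (mul_inv_cancel₀ hl.ne')] at this
    exact this
  have htend : Tendsto (fun s : ℝ => -(1 / l) * Real.exp (-l * s)) atTop (𝓝 0) := by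
    simpa using (exp_tendsto_zero hl).const_mul (-(1 / l))
  have h := integral_Ioi_of_hasDerivAt_of_tendsto (a := 0)
    ((hF 0).continuousAt.continuousWithinAt) (fun x _ => hF x)
    (exp_neg_integrableOn_Ioi 0 hl) htend
  simpa using h

/-- The key bound: for every `l > 0`,
`∫ ‖f'‖ ≤ 2 l ∫ ‖f‖ + (1/l) ∫ ‖f''‖` for an `L`-periodic `C²` function. -/
lemma key_bound (L : ℝ) (hL : 0 < L) (f : ℝ → E) (hper : Function.Periodic f L)
    (hf : ContDiff ℝ 2 f) (l : ℝ) (hl : 0 < l) :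
    (∫ t in (0:ℝ)..L, ‖deriv f t‖) ≤
      2 * l * (∫ t in (0:ℝ)..L, ‖f t‖) + (1 / l) * ∫ t in (0:ℝ)..L, ‖deriv (deriv f) t‖ := by
  -- smoothness facts
  have hdf : Differentiable ℝ f := hf.differentiable (by norm_num)
  have hf2 : ContDiff ℝ (1 + 1) f := by norm_num at hf ⊢; exact hf
  have hcd1 : ContDiff ℝ 1 (deriv f) := (contDiff_succ_iff_deriv.mp hf2).2.2
  have hdf' : Differentiable ℝ (deriv f) := (contDiff_one_iff_deriv.mp hcd1).1
  have hcf'' : Continuous (deriv (deriv f)) := (contDiff_one_iff_deriv.mp hcd1).2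
  have hcf : Continuous f := hdf.continuous
  have hcf' : Continuous (deriv f) := hdf'.continuous
  -- periodicity of derivatives
  have hfun : (fun x => f (x + L)) = f := funext fun x => hper x
  have hperf' : Function.Periodic (deriv f) L := by
    intro t
    calc deriv f (t + L) = deriv (fun x => f (x + L)) t := (deriv_comp_add_const f L t).symm
    _ = deriv f t := by rw [hfun]
  have hfun' : (fun x => deriv f (x + L)) = deriv f := funext fun x => hperf' x
  have hperf'' : Function.Periodic (deriv (deriv f)) L := by
    intro t
    calc deriv (deriv f) (t + L) = deriv (fun x => deriv f (x + L)) t :=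
          (deriv_comp_add_const (deriv f) L t).symm
    _ = deriv (deriv f) t := by rw [hfun']
  -- bounds
  obtain ⟨M0, hM0nn, hM0⟩ := periodic_norm_bound hL hper hcf
  obtain ⟨M1, hM1nn, hM1⟩ := periodic_norm_bound hL hperf' hcf'
  obtain ⟨M2, hM2nn, hM2⟩ := periodic_norm_bound hL hperf'' hcf''
  -- auxiliary scalar function
  set g : ℝ → ℝ := fun u => ‖deriv (deriv f) u‖ + l ^ 2 * ‖f u‖ with hg_def
  have hg_cont : Continuous g := (hcf''.norm).add (continuous_const.mul (hcf.norm))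
  have hg_per : Function.Periodic g L := by
    intro t; simp only [hg_def, hperf'' t, hper t]
  have hg_nonneg : ∀ u, 0 ≤ g u := fun u => by positivity
  have hg_bound : ∀ u, g u ≤ M2 + l ^ 2 * M0 := fun u =>
    add_le_add (hM2 u) (by have := hM0 u; nlinarith)
  have hXle : ∀ u : ℝ, ‖deriv (deriv f) u - (l ^ 2) • f u‖ ≤ g u := by
    intro u
    refine (norm_sub_le _ _).trans ?_
    simp only [hg_def, norm_smul, Real.norm_eq_abs, abs_of_nonneg (sq_nonneg l)]
    exact le_refl _
  have hexp_int : IntegrableOn (fun s : ℝ => Real.exp (-l * s)) (Ioi (0:ℝ)) :=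
    exp_neg_integrableOn_Ioi 0 hl
  -- pointwise bound
  have key_t : ∀ t : ℝ, ‖deriv f t‖ ≤ l * ‖f t‖
      + ∫ s in Ioi (0:ℝ), Real.exp (-l * s) * g (t - s) := by
    intro t
    -- derivative of the auxiliary function F
    have hF : ∀ s : ℝ, HasDerivAt
        (fun s : ℝ => Real.exp (-l * s) • (deriv f (t - s) - l • f (t - s)))
        (-(Real.exp (-l * s) • (deriv (deriv f) (t - s) - (l ^ 2) • f (t - s)))) s := by
      intro s
      have ha : HasDerivAt (fun s : ℝ => Real.exp (-l * s)) (Real.exp (-l * s) * (-l)) s := by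
        have h1 : HasDerivAt (fun s : ℝ => -l * s) (-l) s := by
          simpa using (hasDerivAt_id s).const_mul (-l)
        simpa [mul_comm] using h1.exp
      have hinner : HasDerivAt (fun s : ℝ => t - s) (-1 : ℝ) s := by
        simpa using (hasDerivAt_id s).const_sub t
      have hb : HasDerivAt (fun s : ℝ => f (t - s)) (-(deriv f (t - s))) s := by
        have h2 := (hdf (t - s)).hasDerivAt.scomp s hinner
        simpa [Function.comp_def] using h2
      have hb' : HasDerivAt (fun s : ℝ => deriv f (t - s)) (-(deriv (deriv f) (t - s))) s := by
        have h2 := (hdf' (t - s)).hasDerivAt.scomp s hinner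
        simpa [Function.comp_def] using h2
      have hG : HasDerivAt (fun s : ℝ => deriv f (t - s) - l • f (t - s))
          (-(deriv (deriv f) (t - s)) - l • (-(deriv f (t - s)))) s :=
        hb'.sub (hb.const_smul l)
      have hFd : HasDerivAt (fun s : ℝ => Real.exp (-l * s) • (deriv f (t - s) - l • f (t - s))) _ s :=
        ha.smul hG
      convert hFd using 1
      module
    -- F tends to 0 at infinity
    have hbnd : ∀ s : ℝ, ‖Real.exp (-l * s) • (deriv f (t - s) - l • f (t - s))‖
        ≤ Real.exp (-l * s) * (M1 + l * M0) := by
      intro s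
      rw [norm_smul, Real.norm_eq_abs, abs_of_pos (Real.exp_pos _)]
      refine mul_le_mul_of_nonneg_left ?_ (Real.exp_pos _).le
      refine (norm_sub_le _ _).trans ?_
      rw [norm_smul, Real.norm_eq_abs, abs_of_pos hl]
      exact add_le_add (hM1 _) (mul_le_mul_of_nonneg_left (hM0 _) hl.le)
    have htend : Tendsto
        (fun s : ℝ => Real.exp (-l * s) • (deriv f (t - s) - l • f (t - s))) atTop (𝓝 0) :=
      squeeze_zero_norm hbnd (by simpa using (exp_tendsto_zero hl).mul_const (M1 + l * M0))
    -- integrability of the derivative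
    have hcont_int : Continuous (fun s : ℝ =>
        -(Real.exp (-l * s) • (deriv (deriv f) (t - s) - (l ^ 2) • f (t - s)))) := by
      apply Continuous.neg
      apply Continuous.smul
      · exact Real.continuous_exp.comp (continuous_const.mul continuous_id)
      · exact ((hcf''.comp (continuous_const.sub continuous_id)).sub
          (((hcf.comp (continuous_const.sub continuous_id)).const_smul _)))
    have hFint : IntegrableOn (fun s : ℝ =>
        -(Real.exp (-l * s) • (deriv (deriv f) (t - s) - (l ^ 2) • f (t - s)))) (Ioi (0:ℝ)) := by
      apply Integrable.mono' (g := fun s : ℝ => (M2 + l ^ 2 * M0) * Real.exp (-l * s))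
        (hexp_int.const_mul _) hcont_int.aestronglyMeasurable
      filter_upwards with s
      rw [norm_neg, norm_smul, Real.norm_eq_abs, abs_of_pos (Real.exp_pos _)]
      calc Real.exp (-l * s) * ‖deriv (deriv f) (t - s) - (l ^ 2) • f (t - s)‖
          ≤ Real.exp (-l * s) * (M2 + l ^ 2 * M0) :=
            mul_le_mul_of_nonneg_left ((hXle _).trans (hg_bound _)) (Real.exp_pos _).le
      _ = (M2 + l ^ 2 * M0) * Real.exp (-l * s) := mul_comm _ _
    -- the improper FTC identity
    have hid := integral_Ioi_of_hasDerivAt_of_tendsto (a := 0)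
      ((hF 0).continuousAt.continuousWithinAt) (fun x _ => hF x) hFint htend
    rw [integral_neg] at hid
    have hGint : (∫ s in Ioi (0:ℝ),
        Real.exp (-l * s) • (deriv (deriv f) (t - s) - (l ^ 2) • f (t - s)))
        = deriv f t - l • f t := by
      have h2 := neg_eq_iff_eq_neg.mp hid
      rw [h2]
      simp
    have hrepr : deriv f t = l • f t + ∫ s in Ioi (0:ℝ),
        Real.exp (-l * s) • (deriv (deriv f) (t - s) - (l ^ 2) • f (t - s)) := by
      rw [hGint]; abel
    -- integrability of the majorant
    have hmaj_cont : Continuous (fun s : ℝ => Real.exp (-l * s) * g (t - s)) :=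
      (Real.continuous_exp.comp (continuous_const.mul continuous_id)).mul
        (hg_cont.comp (continuous_const.sub continuous_id))
    have hmaj_int : IntegrableOn (fun s : ℝ => Real.exp (-l * s) * g (t - s)) (Ioi (0:ℝ)) := by
      apply Integrable.mono' (g := fun s : ℝ => (M2 + l ^ 2 * M0) * Real.exp (-l * s))
        (hexp_int.const_mul _) hmaj_cont.aestronglyMeasurable
      filter_upwards with s
      rw [Real.norm_eq_abs,
        abs_of_nonneg (by positivity : (0:ℝ) ≤ Real.exp (-l * s) * g (t - s))]
      calc Real.exp (-l * s) * g (t - s) ≤ Real.exp (-l * s) * (M2 + l ^ 2 * M0) :=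
            mul_le_mul_of_nonneg_left (hg_bound _) (Real.exp_pos _).le
      _ = (M2 + l ^ 2 * M0) * Real.exp (-l * s) := mul_comm _ _
    calc ‖deriv f t‖
        = ‖l • f t + ∫ s in Ioi (0:ℝ),
            Real.exp (-l * s) • (deriv (deriv f) (t - s) - (l ^ 2) • f (t - s))‖ := by
          rw [← hrepr]
    _ ≤ ‖l • f t‖ + ‖∫ s in Ioi (0:ℝ),
            Real.exp (-l * s) • (deriv (deriv f) (t - s) - (l ^ 2) • f (t - s))‖ :=
          norm_add_le _ _
    _ ≤ l * ‖f t‖ + ∫ s in Ioi (0:ℝ), Real.exp (-l * s) * g (t - s) := by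
        refine add_le_add ?_ ?_
        · rw [norm_smul, Real.norm_eq_abs, abs_of_pos hl]
        · refine norm_integral_le_of_norm_le hmaj_int ?_
          filter_upwards with s
          rw [norm_smul, Real.norm_eq_abs, abs_of_pos (Real.exp_pos _)]
          exact mul_le_mul_of_nonneg_left (hXle _) (Real.exp_pos _).le
    -- done with key_t
  -- now integrate in t over (0, L]
  have hIoc : ∀ h : ℝ → ℝ, (∫ u in (0:ℝ)..L, h u) = ∫ u in Ioc (0:ℝ) L, h u := fun h =>
    intervalIntegral.integral_of_le hL.le
  -- product integrability
  have hΦcont : Continuous (fun p : ℝ × ℝ => Real.exp (-l * p.2) * g (p.1 - p.2)) :=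
    (Real.continuous_exp.comp (continuous_const.mul continuous_snd)).mul
      (hg_cont.comp (continuous_fst.sub continuous_snd))
  have hΦint : Integrable (Function.uncurry fun t s : ℝ => Real.exp (-l * s) * g (t - s))
      ((volume.restrict (Ioc (0:ℝ) L)).prod (volume.restrict (Ioi (0:ℝ)))) := by
    apply Integrable.mono' (g := fun p : ℝ × ℝ => (M2 + l ^ 2 * M0) * Real.exp (-l * p.2))
    · exact Integrable.mul_prod (integrableOn_const (C := M2 + l ^ 2 * M0) measure_Ioc_lt_top.ne enorm_ne_top) hexp_int
    · exact hΦcont.aestronglyMeasurable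
    · filter_upwards with p
      rw [Function.uncurry, Real.norm_eq_abs,
        abs_of_nonneg (by positivity : (0:ℝ) ≤ Real.exp (-l * p.2) * g (p.1 - p.2))]
      calc Real.exp (-l * p.2) * g (p.1 - p.2)
          ≤ Real.exp (-l * p.2) * (M2 + l ^ 2 * M0) :=
            mul_le_mul_of_nonneg_left (hg_bound _) (Real.exp_pos _).le
      _ = (M2 + l ^ 2 * M0) * Real.exp (-l * p.2) := mul_comm _ _
  have hH_int : Integrable (fun t : ℝ => ∫ s in Ioi (0:ℝ), Real.exp (-l * s) * g (t - s))
      (volume.restrict (Ioc (0:ℝ) L)) := hΦint.integral_prod_left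
  have h1int : IntegrableOn (fun t : ℝ => ‖deriv f t‖) (Ioc (0:ℝ) L) :=
    (hcf'.norm).integrableOn_Ioc
  have h2int : IntegrableOn (fun t : ℝ => l * ‖f t‖) (Ioc (0:ℝ) L) :=
    (continuous_const.mul (hcf.norm)).integrableOn_Ioc
  have step1 : (∫ t in Ioc (0:ℝ) L, ‖deriv f t‖) ≤
      ∫ t in Ioc (0:ℝ) L,
        (l * ‖f t‖ + ∫ s in Ioi (0:ℝ), Real.exp (-l * s) * g (t - s)) :=
    integral_mono h1int (h2int.add hH_int) (fun t => key_t t)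
  have step2 : (∫ t in Ioc (0:ℝ) L,
      (l * ‖f t‖ + ∫ s in Ioi (0:ℝ), Real.exp (-l * s) * g (t - s)))
      = l * (∫ t in Ioc (0:ℝ) L, ‖f t‖)
        + ∫ t in Ioc (0:ℝ) L, ∫ s in Ioi (0:ℝ), Real.exp (-l * s) * g (t - s) := by
    rw [integral_add h2int hH_int, integral_const_mul]
  have step3 : (∫ t in Ioc (0:ℝ) L, ∫ s in Ioi (0:ℝ), Real.exp (-l * s) * g (t - s))
      = ∫ s in Ioi (0:ℝ), ∫ t in Ioc (0:ℝ) L, Real.exp (-l * s) * g (t - s) :=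
    integral_integral_swap hΦint
  -- the inner integral via periodicity
  have hval : (∫ t in (0:ℝ)..L, g t)
      = (∫ t in (0:ℝ)..L, ‖deriv (deriv f) t‖) + l ^ 2 * ∫ t in (0:ℝ)..L, ‖f t‖ := by
    rw [hg_def]
    show (∫ t in (0:ℝ)..L, (‖deriv (deriv f) t‖ + l ^ 2 * ‖f t‖)) = _
    rw [intervalIntegral.integral_add (f := fun u => ‖deriv (deriv f) u‖)
      (g := fun u => l ^ 2 * ‖f u‖) ((hcf''.norm).intervalIntegrable _ _)
      ((continuous_const.mul (hcf.norm)).intervalIntegrable _ _),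
      intervalIntegral.integral_const_mul]
  have step4 : ∀ s : ℝ, (∫ t in Ioc (0:ℝ) L, Real.exp (-l * s) * g (t - s))
      = Real.exp (-l * s) * ((∫ t in (0:ℝ)..L, ‖deriv (deriv f) t‖)
          + l ^ 2 * ∫ t in (0:ℝ)..L, ‖f t‖) := by
    intro s
    rw [integral_const_mul]
    congr 1
    have e1 : (∫ t in Ioc (0:ℝ) L, g (t - s)) = ∫ t in (0:ℝ)..L, g (t - s) :=
      (intervalIntegral.integral_of_le hL.le).symm
    rw [e1, intervalIntegral.integral_comp_sub_right (fun u => g u) s]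
    have e2 : (∫ u in (0 - s)..(L - s), g u) = ∫ u in (0 - s)..((0 - s) + L), g u := by
      congr 1; ring
    rw [e2, hg_per.intervalIntegral_add_eq (0 - s) 0, zero_add, hval]
  have step5 : (∫ s in Ioi (0:ℝ), ∫ t in Ioc (0:ℝ) L, Real.exp (-l * s) * g (t - s))
      = (1 / l) * ((∫ t in (0:ℝ)..L, ‖deriv (deriv f) t‖)
          + l ^ 2 * ∫ t in (0:ℝ)..L, ‖f t‖) := by
    rw [integral_congr_ae (ae_of_all _ fun s => step4 s), integral_mul_const,
      integral_exp_neg_mul_Ioi hl, mul_comm]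
  -- put everything together
  have hfinal := le_trans step1 (le_of_eq step2)
  rw [step3, step5] at hfinal
  rw [hIoc (fun t => ‖deriv (deriv f) t‖), hIoc (fun t => ‖f t‖)] at hfinal
  rw [hIoc (fun t => ‖deriv f t‖), hIoc (fun t => ‖f t‖),
    hIoc (fun t => ‖deriv (deriv f) t‖)]
  calc (∫ t in Ioc (0:ℝ) L, ‖deriv f t‖)
      ≤ l * (∫ t in Ioc (0:ℝ) L, ‖f t‖)
        + (1 / l) * ((∫ t in Ioc (0:ℝ) L, ‖deriv (deriv f) t‖)
          + l ^ 2 * ∫ t in Ioc (0:ℝ) L, ‖f t‖) := hfinal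
  _ = 2 * l * (∫ t in Ioc (0:ℝ) L, ‖f t‖)
        + (1 / l) * ∫ t in Ioc (0:ℝ) L, ‖deriv (deriv f) t‖ := by
      field_simp
      ring

end Aux

theorem stmt_1 (L : ℝ) (hL : 0 < L) (f : ℝ → EuclideanSpace ℝ (Fin 2))
    (hper : Function.Periodic f L) (hf : ContDiff ℝ 2 f) :
    (∫ t in (0:ℝ)..L, ‖deriv f t‖) ^ 2 ≤
      8 * (∫ t in (0:ℝ)..L, ‖f t‖) * ∫ t in (0:ℝ)..L, ‖deriv (deriv f) t‖ := by
  set B := ∫ t in (0:ℝ)..L, ‖deriv f t‖ with hB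
  set A := ∫ t in (0:ℝ)..L, ‖f t‖ with hA
  set C := ∫ t in (0:ℝ)..L, ‖deriv (deriv f) t‖ with hC
  have key : ∀ l : ℝ, 0 < l → B ≤ 2 * l * A + (1 / l) * C := fun l hl =>
    key_bound L hL f hper hf l hl
  have hAnn : 0 ≤ A := intervalIntegral.integral_nonneg hL.le (fun u _ => norm_nonneg _)
  have hBnn : 0 ≤ B := intervalIntegral.integral_nonneg hL.le (fun u _ => norm_nonneg _)
  have hCnn : 0 ≤ C := intervalIntegral.integral_nonneg hL.le (fun u _ => norm_nonneg _)
  rcases eq_or_lt_of_le hAnn with hA0 | hApos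
  · -- A = 0 : show B = 0
    have hB0 : B = 0 := by
      by_contra hB0
      have hBpos : 0 < B := lt_of_le_of_ne hBnn (Ne.symm hB0)
      have hl : 0 < (C + 1) / B := div_pos (by linarith) hBpos
      have hkey := key _ hl
      rw [← hA0] at hkey
      have hlt : (1 / ((C + 1) / B)) * C < B := by
        rw [one_div_div, div_mul_eq_mul_div, div_lt_iff₀ (by linarith)]
        nlinarith
      linarith
    rw [hB0, ← hA0]
    norm_num
  · -- A > 0
    rcases eq_or_lt_of_le hBnn with hB0 | hBpos
    · rw [← hB0]
      have : (0:ℝ) ≤ 8 * A * C := by positivity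
      simpa using this
    · have hl : 0 < B / (4 * A) := div_pos hBpos (by linarith)
      have hkey := key _ hl
      have hAne : A ≠ 0 := ne_of_gt hApos
      have hBne : B ≠ 0 := ne_of_gt hBpos
      have h1 : 2 * (B / (4 * A)) * A = B / 2 := by field_simp; ring
      have h2 : 1 / (B / (4 * A)) * C = 4 * A * C / B := by
        rw [one_div_div]; ring
      rw [h1, h2] at hkey
      -- B ≤ B/2 + 4AC/B  ⇒  B² ≤ 8AC
      have h3 : B * B ≤ (B / 2 + 4 * A * C / B) * B :=
        mul_le_mul_of_nonneg_right hkey hBnn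
      have h4 : (B / 2 + 4 * A * C / B) * B = B * B / 2 + 4 * A * C := by
        field_simp
      nlinarith [h3, h4]
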